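/- The 5×5 matrix Ã_k (the hydrodynamic block of the Euler dissipation matrix) admits the decomposition Ã_k = L D Lᵀ where L is the given unit lower triangular matrix and D = diag(ρ_k^ln, p̄_k, p̄_k, p̄_k, (1/ρ_k^ln)(p_k*)²/(γ_k−1)); hence Ã_k is symmetric positive definite whenever ρ_k^ln, p̄_k, p_k* > 0 and γ_k > 1. -/

import Mathlib

set_option maxHeartbeats 2000000

open Matrix

/-- The 5×5 hydrodynamic (Euler) block `Ã` of the dissipation matrix. -/
noncomputable def Atilde (ρ pbar pstar γ Ebar : ℝ) (v : Fin 3 → ℝ) :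
    Matrix (Fin 5) (Fin 5) ℝ :=
  !![ρ, ρ * v 0, ρ * v 1, ρ * v 2, Ebar;
     ρ * v 0, ρ * v 0 * v 0 + pbar, ρ * v 0 * v 1, ρ * v 0 * v 2,
       (Ebar + pbar) * v 0;
     ρ * v 1, ρ * v 1 * v 0, ρ * v 1 * v 1 + pbar, ρ * v 1 * v 2,
       (Ebar + pbar) * v 1;
     ρ * v 2, ρ * v 2 * v 0, ρ * v 2 * v 1, ρ * v 2 * v 2 + pbar,
       (Ebar + pbar) * v 2;
     Ebar, (Ebar + pbar) * v 0, (Ebar + pbar) * v 1, (Ebar + pbar) * v 2,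
       (1 / ρ) * (pstar ^ 2 / (γ - 1) + Ebar ^ 2)
         + pbar * (v 0 ^ 2 + v 1 ^ 2 + v 2 ^ 2)]

/-- The unit lower triangular factor `L` of the `LDLᵀ` decomposition. -/
def Lmat (v : Fin 3 → ℝ) (r : ℝ) : Matrix (Fin 5) (Fin 5) ℝ :=
  !![1, 0, 0, 0, 0;
     v 0, 1, 0, 0, 0;
     v 1, 0, 1, 0, 0;
     v 2, 0, 0, 1, 0;
     r, v 0, v 1, v 2, 1]

lemma posDef_mul_mul_transpose (D B : Matrix (Fin 5) (Fin 5) ℝ) (hD : D.PosDef)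
    (hB : ∀ x : Fin 5 → ℝ, Bᵀ *ᵥ x = 0 → x = 0) : (B * D * Bᵀ).PosDef := by
  have hBt : Bᴴ = Bᵀ := by ext i j; simp [conjTranspose_apply]
  have hB2 : Bᵀᴴ = B := by ext i j; simp [conjTranspose_apply]
  rw [posDef_iff_dotProduct_mulVec]
  constructor
  · have := (hD.posSemidef.mul_mul_conjTranspose_same B).1
    rwa [hBt] at this
  · intro x hx
    have h1 : star (Bᵀ *ᵥ x) ⬝ᵥ (D *ᵥ (Bᵀ *ᵥ x))
        = star x ⬝ᵥ ((Bᵀᴴ * D * Bᵀ) *ᵥ x) := by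
      simp only [star_mulVec, dotProduct_mulVec, vecMul_vecMul]
    rw [hB2] at h1
    rw [← h1]
    exact hD.dotProduct_mulVec_pos (fun h => hx (hB x h))

lemma Lmat_transpose_mulVec_eq_zero (v : Fin 3 → ℝ) (r : ℝ) (x : Fin 5 → ℝ)
    (h : (Lmat v r)ᵀ *ᵥ x = 0) : x = 0 := by
  have h4 := congrFun h 4
  have h1 := congrFun h 1
  have h2 := congrFun h 2
  have h3 := congrFun h 3
  have h0 := congrFun h 0
  simp [Lmat, mulVec, dotProduct, Fin.sum_univ_five] at h0 h1 h2 h3 h4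
  have hx4 : x 4 = 0 := h4
  have hx1 : x 1 = 0 := by rw [hx4] at h1; linarith
  have hx2 : x 2 = 0 := by rw [hx4] at h2; linarith
  have hx3 : x 3 = 0 := by rw [hx4] at h3; linarith
  have hx0 : x 0 = 0 := by rw [hx1, hx2, hx3, hx4] at h0; linarith
  funext i
  fin_cases i <;> assumption

/-- `Ã = L D Lᵀ` with `L` unit lower triangular (fifth row
`(Ē/ρ, v₁, v₂, v₃, 1)`) and `D = diag(ρ, p̄, p̄, p̄, (1/ρ)(p*)²/(γ−1))`;
hence `Ã` is symmetric positive definite whenever `ρ, p̄, p* > 0`, `γ > 1`. -/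
theorem Atilde_LDLt_and_posDef (ρ pbar pstar γ Ebar : ℝ) (v : Fin 3 → ℝ)
    (hρ : 0 < ρ) (hp : 0 < pbar) (hps : 0 < pstar) (hγ : 1 < γ) :
    Atilde ρ pbar pstar γ Ebar v
        = Lmat v (Ebar / ρ)
            * Matrix.diagonal ![ρ, pbar, pbar, pbar, (1 / ρ) * pstar ^ 2 / (γ - 1)]
            * (Lmat v (Ebar / ρ))ᵀ ∧
    (Atilde ρ pbar pstar γ Ebar v).PosDef := by
  have hρ' : ρ ≠ 0 := ne_of_gt hρ
  have hγ' : γ - 1 ≠ 0 := by linarith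
  have heq : Atilde ρ pbar pstar γ Ebar v
      = Lmat v (Ebar / ρ)
          * Matrix.diagonal ![ρ, pbar, pbar, pbar, (1 / ρ) * pstar ^ 2 / (γ - 1)]
          * (Lmat v (Ebar / ρ))ᵀ := by
    ext i j
    fin_cases i <;> fin_cases j <;>
      simp [Atilde, Lmat, Matrix.mul_apply, Matrix.diagonal_apply, Fin.sum_univ_five,
        Matrix.vecHead, Matrix.vecTail, Matrix.vecMul_diagonal] <;>
      (try field_simp) <;> (try ring) <;> tauto
  refine ⟨heq, ?_⟩
  rw [heq]
  refine posDef_mul_mul_transpose _ _ (Matrix.PosDef.diagonal ?_)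
    (Lmat_transpose_mulVec_eq_zero v _)
  have h5 : 0 < ρ⁻¹ * pstar ^ 2 / (γ - 1) := by
    apply div_pos (by positivity); linarith
  intro i
  fin_cases i <;> simpa using by first | exact hρ | exact hp | exact h5
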